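/- Let P be the group with presentation ⟨a, e, f | e² = 1, f² = 1, a e a⁻¹ = f, a f a⁻¹ = e⟩. Then the subgroup of P generated by the two elements ae and ea is isomorphic to ℤ × ℤ (free abelian of rank 2) and has index 2 in P. -/

import Mathlib

/-- Relators of the presentation `⟨a, e, f | e² = 1, f² = 1, a e a⁻¹ = f, a f a⁻¹ = e⟩`,
where the generators are `a = of 0`, `e = of 1`, `f = of 2`. -/
def stmt9Rels : Set (FreeGroup (Fin 3)) :=
  {FreeGroup.of 1 * FreeGroup.of 1,
   FreeGroup.of 2 * FreeGroup.of 2,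
   FreeGroup.of 0 * FreeGroup.of 1 * (FreeGroup.of 0)⁻¹ * (FreeGroup.of 2)⁻¹,
   FreeGroup.of 0 * FreeGroup.of 2 * (FreeGroup.of 0)⁻¹ * (FreeGroup.of 1)⁻¹}

namespace Stmt9

open Subgroup

abbrev P : Type := PresentedGroup stmt9Rels

def a : P := PresentedGroup.of 0
def e : P := PresentedGroup.of 1
def f : P := PresentedGroup.of 2

lemma rel_one {r : FreeGroup (Fin 3)} (hr : r ∈ stmt9Rels) :
    PresentedGroup.mk stmt9Rels r = 1 :=
  (QuotientGroup.eq_one_iff _).mpr (Subgroup.subset_normalClosure hr)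

lemma he : e * e = 1 := by
  have h := rel_one (show FreeGroup.of 1 * FreeGroup.of 1 ∈ stmt9Rels by
    simp [stmt9Rels])
  simpa [e, PresentedGroup.of, map_mul] using h

lemma hf : f * f = 1 := by
  have h := rel_one (show FreeGroup.of 2 * FreeGroup.of 2 ∈ stmt9Rels by
    simp [stmt9Rels])
  simpa [f, PresentedGroup.of, map_mul] using h

lemma h3 : a * e * a⁻¹ = f := by
  have h := rel_one (show FreeGroup.of 0 * FreeGroup.of 1 * (FreeGroup.of 0)⁻¹ *
      (FreeGroup.of 2)⁻¹ ∈ stmt9Rels by simp [stmt9Rels])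
  have h' : a * e * a⁻¹ * f⁻¹ = 1 := by
    simpa [a, e, f, PresentedGroup.of, map_mul, map_inv] using h
  exact mul_inv_eq_one.mp h'

lemma h4 : a * f * a⁻¹ = e := by
  have h := rel_one (show FreeGroup.of 0 * FreeGroup.of 2 * (FreeGroup.of 0)⁻¹ *
      (FreeGroup.of 1)⁻¹ ∈ stmt9Rels by simp [stmt9Rels])
  have h' : a * f * a⁻¹ * e⁻¹ = 1 := by
    simpa [a, e, f, PresentedGroup.of, map_mul, map_inv] using h
  exact mul_inv_eq_one.mp h'

lemma e_inv : e⁻¹ = e := by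
  rw [inv_eq_iff_mul_eq_one]; exact he

lemma f_inv : f⁻¹ = f := by
  rw [inv_eq_iff_mul_eq_one]; exact hf

lemma hcomm : a * a * e = e * (a * a) := by
  have h : a * (a * e * a⁻¹) * a⁻¹ = e := by rw [h3]; exact h4
  calc a * a * e = (a * (a * e * a⁻¹) * a⁻¹) * (a * a) := by group
    _ = e * (a * a) := by rw [h]

noncomputable def x : P := a * e
noncomputable def y : P := e * a

lemma hxy : x * y = a * a := by
  have h1 : x * y = a * (e * e) * a := by rw [x, y]; group
  rw [h1, he]; group

lemma haa_e : a * a * (e * e) = a * a := by rw [he, mul_one]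

lemma hyx : y * x = a * a := by
  have h1 : y * x = e * (a * a) * e := by rw [x, y]; group
  rw [h1, ← hcomm]
  calc a * a * e * e = a * a * (e * e) := by group
    _ = a * a := haa_e

lemma hc : Commute x y := by
  unfold Commute SemiconjBy
  rw [hxy, hyx]

lemma conj_a_x : a * x * a⁻¹ = y := by
  have h1 : a * x * a⁻¹ = (a * a * e) * a⁻¹ := by rw [x]; group
  rw [h1, hcomm, y]; group

lemma conj_a_y : a * y * a⁻¹ = x := by
  rw [x, y]; group

lemma conj_ainv_x : a⁻¹ * x * (a⁻¹)⁻¹ = y := by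
  rw [x, y]; group

lemma conj_ainv_y : a⁻¹ * y * (a⁻¹)⁻¹ = x := by
  have h1 : a⁻¹ * y * (a⁻¹)⁻¹ = a⁻¹ * (e * (a * a)) := by rw [y]; group
  rw [h1, ← hcomm, x]; group

lemma conj_e_x : e * x * e⁻¹ = y := by
  rw [e_inv, x, y]
  calc e * (a * e) * e = e * a * (e * e) := by group
    _ = e * a := by rw [he, mul_one]

lemma conj_e_y : e * y * e⁻¹ = x := by
  rw [e_inv, x, y]
  calc e * (e * a) * e = (e * e) * (a * e) := by group
    _ = a * e := by rw [he, one_mul]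

lemma conj_f_x : f * x * f⁻¹ = y := by
  have h1 : f * x * f⁻¹ = a * (e * (a⁻¹ * x * (a⁻¹)⁻¹) * e⁻¹) * a⁻¹ := by
    rw [← h3]; group
  rw [h1, conj_ainv_x, conj_e_y, conj_a_x]

lemma conj_f_y : f * y * f⁻¹ = x := by
  have h1 : f * y * f⁻¹ = a * (e * (a⁻¹ * y * (a⁻¹)⁻¹) * e⁻¹) * a⁻¹ := by
    rw [← h3]; group
  rw [h1, conj_ainv_y, conj_e_x, conj_a_y]

/-! ### Permutation representation on `ℤ × ℤ` -/

def aP : Equiv.Perm (ℤ × ℤ) where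
  toFun v := (v.2 + 1, v.1)
  invFun v := (v.2, v.1 - 1)
  left_inv v := by simp
  right_inv v := by simp

def eP : Equiv.Perm (ℤ × ℤ) where
  toFun v := (v.2, v.1)
  invFun v := (v.2, v.1)
  left_inv v := by simp
  right_inv v := by simp

def fP : Equiv.Perm (ℤ × ℤ) where
  toFun v := (v.2 + 1, v.1 - 1)
  invFun v := (v.2 + 1, v.1 - 1)
  left_inv v := by simp
  right_inv v := by simp

@[simp] lemma aP_apply (v : ℤ × ℤ) : aP v = (v.2 + 1, v.1) := rfl
@[simp] lemma aP_inv_apply (v : ℤ × ℤ) : aP⁻¹ v = (v.2, v.1 - 1) := rfl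
@[simp] lemma eP_apply (v : ℤ × ℤ) : eP v = (v.2, v.1) := rfl
@[simp] lemma eP_inv_apply (v : ℤ × ℤ) : eP⁻¹ v = (v.2, v.1) := rfl
@[simp] lemma fP_apply (v : ℤ × ℤ) : fP v = (v.2 + 1, v.1 - 1) := rfl
@[simp] lemma fP_inv_apply (v : ℤ × ℤ) : fP⁻¹ v = (v.2 + 1, v.1 - 1) := rfl

def gens : Fin 3 → Equiv.Perm (ℤ × ℤ) := ![aP, eP, fP]

lemma relsCheck : ∀ r ∈ stmt9Rels, FreeGroup.lift gens r = 1 := by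
  intro r hr
  simp only [stmt9Rels, Set.mem_insert_iff, Set.mem_singleton_iff] at hr
  rcases hr with rfl | rfl | rfl | rfl <;>
        ext v <;> (simp [gens, Equiv.Perm.mul_apply]; try ring)

noncomputable def chi : P →* Equiv.Perm (ℤ × ℤ) := PresentedGroup.toGroup relsCheck

@[simp] lemma chi_a : chi a = aP := PresentedGroup.toGroup.of relsCheck
@[simp] lemma chi_e : chi e = eP := PresentedGroup.toGroup.of relsCheck
@[simp] lemma chi_f : chi f = fP := PresentedGroup.toGroup.of relsCheck

lemma chi_x : chi x = Equiv.addLeft ((1, 0) : ℤ × ℤ) := by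
  rw [x, map_mul, chi_a, chi_e]
  ext v <;> simp [Equiv.Perm.mul_apply] <;> ring

lemma chi_y : chi y = Equiv.addLeft ((0, 1) : ℤ × ℤ) := by
  rw [y, map_mul, chi_a, chi_e]
  ext v <;> simp [Equiv.Perm.mul_apply] <;> ring

/-! ### The homomorphism from `ℤ × ℤ` -/

noncomputable def rho : Multiplicative (ℤ × ℤ) →* P where
  toFun p := x ^ (Multiplicative.toAdd p).1 * y ^ (Multiplicative.toAdd p).2
  map_one' := by simp
  map_mul' p q := by
    have h := (hc.symm.zpow_zpow (Multiplicative.toAdd p).2 (Multiplicative.toAdd q).1)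
    simp only [toAdd_mul, Prod.fst_add, Prod.snd_add, zpow_add]
    rw [h.mul_mul_mul_comm]

lemma rho_apply (i j : ℤ) :
    rho (Multiplicative.ofAdd (i, j)) = x ^ i * y ^ j := rfl

lemma chi_rho (p : Multiplicative (ℤ × ℤ)) :
    chi (rho p) = Equiv.addLeft (Multiplicative.toAdd p) := by
  rw [show rho p = x ^ (Multiplicative.toAdd p).1 * y ^ (Multiplicative.toAdd p).2 from rfl]
  rw [map_mul, map_zpow, map_zpow, chi_x, chi_y, Equiv.zsmul_addLeft, Equiv.zsmul_addLeft,
    ← Equiv.addLeft_add]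
  congr 1
  simp [Prod.ext_iff]

lemma rho_inj : Function.Injective rho := by
  rw [injective_iff_map_eq_one]
  intro p hp
  have h := chi_rho p
  rw [hp, map_one] at h
  have h2 := Equiv.ext_iff.mp h ((0 : ℤ), (0 : ℤ))
  simp only [Equiv.coe_addLeft, Equiv.Perm.coe_one, id_eq, Prod.mk_zero_zero, add_zero] at h2
  rw [← ofAdd_toAdd p, ← h2]
  rfl


/-! ### The subgroup -/

noncomputable def H : Subgroup P := Subgroup.closure {x, y}

lemma x_mem : x ∈ H := Subgroup.subset_closure (by simp)
lemma y_mem : y ∈ H := Subgroup.subset_closure (by simp)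

lemma range_rho : rho.range = H := by
  apply le_antisymm
  · rintro _ ⟨p, rfl⟩
    exact mul_mem (zpow_mem x_mem _) (zpow_mem y_mem _)
  · rw [H, Subgroup.closure_le]
    intro g hg
    simp only [Set.mem_insert_iff, Set.mem_singleton_iff] at hg
    rcases hg with rfl | rfl
    · exact ⟨Multiplicative.ofAdd (1, 0), by rw [rho_apply]; simp⟩
    · exact ⟨Multiplicative.ofAdd (0, 1), by rw [rho_apply]; simp⟩

noncomputable def iso : ↥H ≃* Multiplicative (ℤ × ℤ) :=
  (MulEquiv.subgroupCongr range_rho.symm).trans (MonoidHom.ofInjective rho_inj).symm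

/-! ### Normality -/

lemma conj_mem (g : P) (hx : g * x * g⁻¹ ∈ H) (hy : g * y * g⁻¹ ∈ H) :
    ∀ h ∈ H, g * h * g⁻¹ ∈ H := by
  intro h hh
  refine Subgroup.closure_induction ?_ ?_ ?_ ?_ hh
  · intro z hz
    simp only [Set.mem_insert_iff, Set.mem_singleton_iff] at hz
    rcases hz with rfl | rfl
    · exact hx
    · exact hy
  · simpa using one_mem H
  · intro u v _ _ pu pv
    have huv : g * (u * v) * g⁻¹ = (g * u * g⁻¹) * (g * v * g⁻¹) := by group
    rw [huv]; exact mul_mem pu pv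
  · intro u _ pu
    have hui : g * u⁻¹ * g⁻¹ = (g * u * g⁻¹)⁻¹ := by group
    rw [hui]; exact inv_mem pu

lemma mem_normalizer_of (g : P) (hx : g * x * g⁻¹ ∈ H) (hy : g * y * g⁻¹ ∈ H)
    (hx' : g⁻¹ * x * g⁻¹⁻¹ ∈ H) (hy' : g⁻¹ * y * g⁻¹⁻¹ ∈ H) : g ∈ Subgroup.normalizer (H : Set P) := by
  rw [Subgroup.mem_normalizer_iff]
  intro h
  constructor
  · intro hh; exact conj_mem g hx hy h hh
  · intro hh
    have h2 := conj_mem g⁻¹ hx' hy' _ hh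
    simpa [mul_assoc] using h2

lemma Hnormal : H.Normal := by
  rw [← Subgroup.normalizer_eq_top_iff, eq_top_iff']
  intro p
  refine PresentedGroup.generated_by stmt9Rels (Subgroup.normalizer (H : Set P)) ?_ p
  intro j
  fin_cases j
  · exact mem_normalizer_of a (by rw [conj_a_x]; exact y_mem) (by rw [conj_a_y]; exact x_mem)
      (by rw [conj_ainv_x]; exact y_mem) (by rw [conj_ainv_y]; exact x_mem)
  · refine mem_normalizer_of e (by rw [conj_e_x]; exact y_mem) (by rw [conj_e_y]; exact x_mem)
      ?_ ?_
    · rw [e_inv]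
      rw [conj_e_x]; exact y_mem
    · rw [e_inv]
      rw [conj_e_y]; exact x_mem
  · refine mem_normalizer_of f (by rw [conj_f_x]; exact y_mem) (by rw [conj_f_y]; exact x_mem)
      ?_ ?_
    · rw [f_inv]
      rw [conj_f_x]; exact y_mem
    · rw [f_inv]
      rw [conj_f_y]; exact x_mem

/-! ### Index two -/

lemma a_notin_H : a ∉ H := by
  intro ha
  rw [← range_rho] at ha
  obtain ⟨p, hp⟩ := ha
  have h := chi_rho p
  rw [hp, chi_a] at h
  have h1 := Equiv.ext_iff.mp h ((0 : ℤ), (0 : ℤ))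
  have h2 := Equiv.ext_iff.mp h ((0 : ℤ), (1 : ℤ))
  simp only [aP_apply, Equiv.coe_addLeft, Prod.ext_iff, Prod.fst_add, Prod.snd_add] at h1 h2
  omega

lemma aa_mem : a * a ∈ H := by rw [← hxy]; exact mul_mem x_mem y_mem

lemma index_H : H.index = 2 := by
  haveI : H.Normal := Hnormal
  set t : P ⧸ H := ((a : P) : P ⧸ H) with ht
  have ht2 : t ^ 2 = 1 := by
    rw [ht, pow_two, ← QuotientGroup.mk_mul]
    exact (QuotientGroup.eq_one_iff _).mpr aa_mem
  have ht1 : t ≠ 1 := fun hcon => a_notin_H ((QuotientGroup.eq_one_iff _).mp hcon)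
  haveI : Fact (Nat.Prime 2) := ⟨Nat.prime_two⟩
  have hord : orderOf t = 2 := orderOf_eq_prime ht2 ht1
  have hemem : ((e : P) : P ⧸ H) ∈ Subgroup.zpowers t := by
    have h1 : ((x : P) : P ⧸ H) = 1 := (QuotientGroup.eq_one_iff _).mpr x_mem
    rw [x, QuotientGroup.mk_mul] at h1
    have h2 : ((e : P) : P ⧸ H) = t⁻¹ := by
      rw [ht]
      exact eq_inv_of_mul_eq_one_right h1
    rw [h2]
    exact inv_mem (Subgroup.mem_zpowers t)
  have htop : Subgroup.zpowers t = ⊤ := by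
    rw [eq_top_iff']
    intro q
    induction q using QuotientGroup.induction_on with
    | _ p =>
      refine PresentedGroup.generated_by stmt9Rels
        ((Subgroup.zpowers t).comap (QuotientGroup.mk' H)) ?_ p
      intro j
      rw [Subgroup.mem_comap]
      fin_cases j
      · exact Subgroup.mem_zpowers t
      · exact hemem
      · have hfq : ((f : P) : P ⧸ H) = ((x : P) : P ⧸ H) * (((a : P) : P ⧸ H))⁻¹ := by
          rw [← h3, x, QuotientGroup.mk_mul, QuotientGroup.mk_mul, QuotientGroup.mk_inv]
        have h1 : ((x : P) : P ⧸ H) = 1 := (QuotientGroup.eq_one_iff _).mpr x_mem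
        show ((f : P) : P ⧸ H) ∈ Subgroup.zpowers t
        rw [hfq, h1, one_mul]
        exact inv_mem (Subgroup.mem_zpowers t)
  calc H.index = Nat.card (P ⧸ H) := Subgroup.index_eq_card H
    _ = Nat.card (⊤ : Subgroup (P ⧸ H)) := Subgroup.card_top.symm
    _ = Nat.card (Subgroup.zpowers t) := by rw [htop]
    _ = orderOf t := Nat.card_zpowers t
    _ = 2 := hord

end Stmt9

/-- In the group `P = ⟨a, e, f | e² = 1, f² = 1, a e a⁻¹ = f, a f a⁻¹ = e⟩`, the subgroup
generated by the two elements `a e` and `e a` is free abelian of rank 2 (isomorphic to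
`ℤ × ℤ`) and has index 2 in `P`. -/
theorem stmt9 :
    Nonempty ((Subgroup.closure
        {PresentedGroup.of (rels := stmt9Rels) 0 * PresentedGroup.of 1,
         PresentedGroup.of (rels := stmt9Rels) 1 * PresentedGroup.of 0}) ≃*
      Multiplicative (ℤ × ℤ)) ∧
    (Subgroup.closure
        {PresentedGroup.of (rels := stmt9Rels) 0 * PresentedGroup.of 1,
         PresentedGroup.of (rels := stmt9Rels) 1 * PresentedGroup.of 0}).index = 2 := by
  constructor
  · exact ⟨Stmt9.iso⟩
  · exact Stmt9.index_H
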